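/- Let D be a triangulated category and let B, C be strict full triangulated subcategories of D with Hom_D(B,C) = 0 for all B ∈ B, C ∈ C. Assume C = B^⊥ (that is, A ∈ C if and only if Hom_D(B,A) = 0 for all B ∈ B) and that the inclusion functor i_* : B → D has a right adjoint i^! : D → B with counit ε. Then for every object A of D, the cone of the counit map ε_A : i_*(i^!(A)) → A belongs to C; in particular every A fits into a distinguished triangle B → A → C → B[1] with B ∈ B and C ∈ C. -/

import Mathlib

open CategoryTheory Limits Pretriangulated

universe v u

/-- Let `(B, C)` be a semiorthogonal pair of strict full triangulated subcategories of
a triangulated category `D` with `C = B^⊥`, and suppose the inclusion `i_* : B → D`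
has a right adjoint `i^!` with counit `ε`.  Then for every `A`, the cone of
`ε_A : i_*(i^!(A)) → A` lies in `C`; in particular every `A` fits into a distinguished
triangle `B → A → C → B[1]` with `B ∈ B` and `C ∈ C`. -/
theorem cone_of_counit_mem_right_part
    {D : Type u} [Category.{v} D] [HasZeroObject D] [HasShift D ℤ] [Preadditive D]
    [∀ n : ℤ, (shiftFunctor D n).Additive] [Pretriangulated D] [IsTriangulated D]
    (B C : ObjectProperty D) [B.IsTriangulated] [C.IsTriangulated]
    [B.IsClosedUnderIsomorphisms] [C.IsClosedUnderIsomorphisms]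
    (horth : ∀ (X Y : D), B X → C Y → ∀ f : X ⟶ Y, f = 0)
    (hC : ∀ A : D, C A ↔ (∀ X : D, B X → ∀ f : X ⟶ A, f = 0))
    (ibang : D ⥤ B.FullSubcategory)
    (adj : B.ι ⊣ ibang) :
    (∀ (A Z : D) (g : A ⟶ Z)
      (h : Z ⟶ (B.ι.obj (ibang.obj A))⟦(1 : ℤ)⟧),
      (Triangle.mk (adj.counit.app A) g h ∈ distTriang D) → C Z) ∧
    (∀ A : D, ∃ (X Y : D) (f : X ⟶ A) (g : A ⟶ Y) (h : Y ⟶ X⟦(1 : ℤ)⟧),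
      B X ∧ C Y ∧ Triangle.mk f g h ∈ distTriang D) := by
  -- composition with the counit is injective on morphisms from objects of B
  have key_inj : ∀ (X : B.FullSubcategory) (A : D)
      (u : (B.ι).obj X ⟶
        (B.ι).obj (ibang.obj A)),
      u ≫ adj.counit.app A = 0 → u = 0 := by
    intro X A u hu
    have h1 : (adj.homEquiv X A).symm (ObjectProperty.homMk u) = u ≫ adj.counit.app A := by
      rw [adj.homEquiv_counit]; rfl
    have h2 : (adj.homEquiv X A).symm (0 : X ⟶ ibang.obj A) = 0 := by
      rw [adj.homEquiv_counit]
      change (0 : (B.ι).obj X ⟶ _) ≫ _ = 0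
      simp
    exact congrArg (fun k => k.hom) ((adj.homEquiv X A).symm.injective (h1.trans (hu.trans h2.symm)))
  -- composition with the counit is surjective on morphisms from objects of B
  have key_surj : ∀ (X : B.FullSubcategory) (A : D)
      (v : (B.ι).obj X ⟶ A),
      ∃ u : (B.ι).obj X ⟶
        (B.ι).obj (ibang.obj A),
      u ≫ adj.counit.app A = v := by
    intro X A v
    have h1 := adj.homEquiv_counit (X := X) (Y := A) (g := adj.homEquiv X A v)
    rw [Equiv.symm_apply_apply] at h1
    exact ⟨(B.ι).map (adj.homEquiv X A v), h1.symm⟩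
  have part1 : ∀ (A Z : D) (g : A ⟶ Z)
      (h : Z ⟶ ((B.ι).obj (ibang.obj A))⟦(1 : ℤ)⟧),
      (Triangle.mk (adj.counit.app A) g h ∈ distTriang D) → C Z := by
    intro A Z g h hT
    rw [hC]
    intro X hX f
    -- Step 1 : (f ≫ h) ≫ ε⟦1⟧ = 0
    have hcomp : (f ≫ h) ≫ (adj.counit.app A)⟦(1:ℤ)⟧' = 0 := by
      have h31 := comp_distTriang_mor_zero₃₁ _ hT
      simp only [Triangle.mk_mor₃, Triangle.mk_mor₁] at h31
      rw [Category.assoc]; exact (congrArg (fun k => f ≫ k) h31).trans comp_zero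
    -- Step 2 : f ≫ h = 0
    have hfh : f ≫ h = 0 := by
      set e : (X⟦(-1:ℤ)⟧)⟦(1:ℤ)⟧ ⟶ X :=
        (shiftFunctorCompIsoId D (-1 : ℤ) (1 : ℤ) (by omega)).hom.app X with he
      set w : X⟦(-1:ℤ)⟧ ⟶ (B.ι).obj (ibang.obj A) :=
        (shiftFunctor D (1:ℤ)).preimage (e ≫ f ≫ h) with hw
      have hw1 : w⟦(1:ℤ)⟧' = e ≫ f ≫ h := (shiftFunctor D (1:ℤ)).map_preimage _
      have hwε : w ≫ adj.counit.app A = 0 := by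
        apply (shiftFunctor D (1:ℤ)).map_injective
        rw [Functor.map_comp, hw1, Functor.map_zero]
        rw [Category.assoc, Category.assoc]
        rw [← Category.assoc f, hcomp]  -- reassociate
        simp
      have hwB : w = 0 := key_inj ⟨X⟦(-1:ℤ)⟧, B.le_shift (-1) X hX⟩ A w hwε
      have : e ≫ f ≫ h = 0 := by rw [← hw1, hwB, Functor.map_zero]
      have heiso : IsIso e := by
        rw [he]; infer_instance
      rw [← cancel_epi e, this, comp_zero]
    -- Step 3 : f factors through g
    obtain ⟨t, ht⟩ := Triangle.coyoneda_exact₃ _ hT f hfh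
    -- Step 4 : t factors through the counit, hence f = 0
    obtain ⟨u, hu⟩ := key_surj ⟨X, hX⟩ A t
    have h12 := comp_distTriang_mor_zero₁₂ _ hT
    simp only [Triangle.mk_mor₁, Triangle.mk_mor₂] at h12 ht
    rw [ht, ← hu]; exact (Category.assoc _ _ _).trans ((congrArg (fun k => u ≫ k) h12).trans comp_zero)
  refine ⟨part1, fun A => ?_⟩
  obtain ⟨Z, g, h, hT⟩ := distinguished_cocone_triangle (adj.counit.app A)
  exact ⟨(B.ι).obj (ibang.obj A), Z, adj.counit.app A, g, h,
    (ibang.obj A).property, part1 A Z g h hT, hT⟩
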